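/- For a prime p > 3 with p ∉ {5, 13}, the polynomial P(x) = x(2x+1)·Q(x)^{(p-1)/2} ∈ 𝔽_p[x], where Q(x) = 4+x²+2x³+x⁴, satisfies the differential equation (4+8x+x²+4x³+5x⁴+2x⁵)·x·P'(x) − (4+16x+x³+x⁴)·P(x) = 0 over 𝔽_p. -/

import Mathlib

open Polynomial

/-- For a prime `p > 3`, `p ∉ {5, 13}`, the polynomial
`P(x) = x(2x+1)·Q(x)^{(p-1)/2} ∈ 𝔽_p[x]` with `Q(x) = 4+x²+2x³+x⁴` satisfies
`(4+8x+x²+4x³+5x⁴+2x⁵)·x·P'(x) − (4+16x+x³+x⁴)·P(x) = 0` over `𝔽_p`. -/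
theorem stmt_16 (p : ℕ) (hp : p.Prime) (h3 : 3 < p) (h5 : p ≠ 5) (h13 : p ≠ 13) :
    (4 + 8 * X + X ^ 2 + 4 * X ^ 3 + 5 * X ^ 4 + 2 * X ^ 5 : Polynomial (ZMod p)) *
        (X * Polynomial.derivative
          (X * (2 * X + 1) * (4 + X ^ 2 + 2 * X ^ 3 + X ^ 4) ^ ((p - 1) / 2)))
      - (4 + 16 * X + X ^ 3 + X ^ 4) *
          (X * (2 * X + 1) * (4 + X ^ 2 + 2 * X ^ 3 + X ^ 4) ^ ((p - 1) / 2)) = 0 := by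
  have hodd : p % 2 = 1 := (Nat.Prime.eq_two_or_odd hp).resolve_left (by omega)
  set m := (p - 1) / 2 with hm
  have hm1 : (p - 1) / 2 = (m - 1) + 1 := by omega
  have key : (m : ZMod p) * 2 = -1 := by
    have h2 : m * 2 = p - 1 := by omega
    have hc : ((m * 2 : ℕ) : ZMod p) = ((p - 1 : ℕ) : ZMod p) := by rw [h2]
    have hc2 : ((p - 1 : ℕ) : ZMod p) = (p : ZMod p) - 1 := by
      rw [Nat.cast_sub (by omega)]; simp
    rw [ZMod.natCast_self] at hc2
    push_cast at hc
    rw [hc, hc2]; ring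
  have keyC : (C ((m : ZMod p)) : Polynomial (ZMod p)) * 2 = -1 := by
    have := congrArg (C : ZMod p →+* Polynomial (ZMod p)) key
    simpa [C_ofNat] using this
  have hpow : ((4 + X ^ 2 + 2 * X ^ 3 + X ^ 4 : Polynomial (ZMod p)) ^ m)
      = (4 + X ^ 2 + 2 * X ^ 3 + X ^ 4) ^ (m - 1) * (4 + X ^ 2 + 2 * X ^ 3 + X ^ 4) := by
    rw [← pow_succ, Nat.sub_add_cancel (by omega : 1 ≤ m)]
  rw [derivative_mul, derivative_pow, hpow]
  have hd1 : derivative (X * (2 * X + 1) : Polynomial (ZMod p)) = 4 * X + 1 := by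
    simp [derivative_mul]; ring
  have hd2 : derivative (4 + X ^ 2 + 2 * X ^ 3 + X ^ 4 : Polynomial (ZMod p))
      = 2 * X + 6 * X ^ 2 + 4 * X ^ 3 := by
    simp [derivative_mul, derivative_pow, map_ofNat]; ring
  rw [hd1, hd2]
  set Qm : Polynomial (ZMod p) := (4 + X ^ 2 + 2 * X ^ 3 + X ^ 4) ^ (m - 1) with hQm
  linear_combination (Qm * ((4 + 8 * X + X ^ 2 + 4 * X ^ 3 + 5 * X ^ 4 + 2 * X ^ 5)
      * X * (4 * X + 1) * (4 + X ^ 2 + 2 * X ^ 3 + X ^ 4)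
    - (4 + 16 * X + X ^ 3 + X ^ 4) * X * (2 * X + 1)
      * (4 + X ^ 2 + 2 * X ^ 3 + X ^ 4))) * keyC
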